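/- Let f = {f_u}_{u∈D} be a self-aware family of inductively defined trace functions (f_u(ε)=ε and f_u(αa)=(f_u(α), g(α,a,u)) if C(α,a,u) holds, else f_u(αa)=f_u(α)). Then a system M is f-secure (f_u(α)=f_u(β) implies obs_u(s0·α)=obs_u(s0·β)) if and only if M is f-view-secure (f_u(α)=f_u(β) implies view_u(α)=view_u(β)). -/
import Mathlib


open Classical

/-- Binary trees over actions, values of the `ta` purge functions. -/
inductive TATree (A : Type) : Type where
  | eps : TATree A
  | node : TATree A → TATree A → A → TATree A

/-- Run a deterministic system along a trace (newest action at the head of the list). -/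
def runL {S A : Type} (step : S → A → S) (s0 : S) : List A → S
  | [] => s0
  | a :: α => step (runL step s0 α) a

/-- The permissive purge function `ta^◇` for a dynamic policy `P`. -/
noncomputable def taD {D A : Type} (dm : A → D) (P : List A → D → D → Prop) :
    List A → D → TATree A
  | [], _ => TATree.eps
  | a :: α, u =>
    if P α (dm a) u then TATree.node (taD dm P α u) (taD dm P α (dm a)) a
    else taD dm P α u

/-- The unwinding relations: smallest family of equivalence relations on traces
satisfying WSC and DLR with respect to the dynamic policy `P`. -/
inductive Unw {D A : Type} (dm : A → D) (P : List A → D → D → Prop) :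
    D → List A → List A → Prop where
  | refl (u : D) (α : List A) : Unw dm P u α α
  | symm {u : D} {α β : List A} : Unw dm P u α β → Unw dm P u β α
  | trans {u : D} {α β γ : List A} : Unw dm P u α β → Unw dm P u β γ → Unw dm P u α γ
  | dlr (u : D) (α : List A) (a : A) : ¬ P α (dm a) u → Unw dm P u (a :: α) α
  | wsc (u : D) {α β : List A} (a : A) :
      Unw dm P u α β → Unw dm P (dm a) α β → Unw dm P u (a :: α) (a :: β)

/-- The prohibitive purge function `ta^□`, whose condition is distributed knowledge
of the policy edge, interpreted over the Kripke structure given by the unwinding relations. -/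
noncomputable def taB {D A : Type} (dm : A → D) (P : List A → D → D → Prop) :
    List A → D → TATree A
  | [], _ => TATree.eps
  | a :: α, u =>
    if (∀ β, Unw dm P u α β → Unw dm P (dm a) α β → P β (dm a) u) then
      TATree.node (taB dm P α u) (taB dm P α (dm a)) a
    else taB dm P α u

/-- Absorptive concatenation of an observation onto a view (newest element first). -/
noncomputable def absorb {A O : Type} (x : O) : List (A ⊕ O) → List (A ⊕ O)
  | [] => [Sum.inr x]
  | y :: t => if y = Sum.inr x then y :: t else Sum.inr x :: y :: t

/-- The perfect-recall view of a domain `u` of a trace. -/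
noncomputable def viewL {D A O S : Type} (dm : A → D) (step : S → A → S) (s0 : S)
    (obs : D → S → O) (u : D) : List A → List (A ⊕ O)
  | [] => [Sum.inr (obs u s0)]
  | a :: α =>
    if dm a = u then
      Sum.inr (obs u (runL step s0 (a :: α))) :: Sum.inl a :: viewL dm step s0 obs u α
    else absorb (obs u (runL step s0 (a :: α))) (viewL dm step s0 obs u α)

/-- An inductively defined family of trace functions given by condition `C` and record `g`;
pairing `(f_u α, g(α,a,u))` is represented by list cons. -/
noncomputable def fFam {D A G : Type} (C : List A → A → D → Prop) (g : List A → A → D → G) :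
    List A → D → List G
  | [], _ => []
  | a :: α, u => if C α a u then g α a u :: fFam C g α u else fFam C g α u

lemma absorb_head {A O : Type} (x : O) (l : List (A ⊕ O)) :
    ∃ t, absorb x l = Sum.inr x :: t := by
  cases l with
  | nil => exact ⟨[], rfl⟩
  | cons y t =>
    by_cases h : y = Sum.inr x
    · subst h; exact ⟨t, by simp [absorb]⟩
    · exact ⟨y :: t, by simp [absorb, h]⟩

lemma viewL_head {D A O S : Type} (dm : A → D) (step : S → A → S) (s0 : S)
    (obs : D → S → O) (u : D) (α : List A) :
    ∃ t, viewL dm step s0 obs u α = Sum.inr (obs u (runL step s0 α)) :: t := by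
  cases α with
  | nil => exact ⟨[], rfl⟩
  | cons a α =>
    by_cases h : dm a = u
    · exact ⟨Sum.inl a :: viewL dm step s0 obs u α, by simp [viewL, h]⟩
    · simpa [viewL, h] using absorb_head (obs u (runL step s0 (a :: α)))
        (viewL dm step s0 obs u α)

lemma viewL_cons_eq {D A O S : Type} (dm : A → D) (step : S → A → S) (s0 : S)
    (obs : D → S → O) {u : D} {a : A} (α : List A) (h : dm a = u) :
    viewL dm step s0 obs u (a :: α) =
      Sum.inr (obs u (runL step s0 (a :: α))) :: Sum.inl a :: viewL dm step s0 obs u α := by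
  simp [viewL, h]

lemma viewL_cons_ne {D A O S : Type} (dm : A → D) (step : S → A → S) (s0 : S)
    (obs : D → S → O) {u : D} {a : A} (α : List A) (h : dm a ≠ u) :
    viewL dm step s0 obs u (a :: α) =
      absorb (obs u (runL step s0 (a :: α))) (viewL dm step s0 obs u α) := by
  simp [viewL, h]

lemma absorb_self {A O : Type} (x : O) (t : List (A ⊕ O)) :
    absorb x (Sum.inr x :: t) = Sum.inr x :: t := by simp [absorb]

lemma forward_aux {D A O G S : Type} (dm : A → D) (step : S → A → S) (s0 : S)
    (obs : D → S → O) (C : List A → A → D → Prop) (g : List A → A → D → G)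
    (hsa1 : ∀ α a u, dm a = u → C α a u)
    (hsa2 : ∀ α β a b u, g α a u = g β b u → a = b)
    (hsec : ∀ u (α β : List A), fFam C g α u = fFam C g β u →
        obs u (runL step s0 α) = obs u (runL step s0 β)) :
    ∀ n u (α β : List A), α.length + β.length ≤ n → fFam C g α u = fFam C g β u →
      viewL dm step s0 obs u α = viewL dm step s0 obs u β := by
  intro n
  induction n with
  | zero =>
    intro u α β hlen _
    have hα : α = [] := List.length_eq_zero_iff.mp (by omega)
    have hβ : β = [] := List.length_eq_zero_iff.mp (by omega)
    subst hα; subst hβ; rfl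
  | succ n ih =>
    intro u α β hlen hf
    match α, β with
    | [], [] => rfl
    | [], b :: β' =>
      have hC : ¬ C β' b u := by
        intro h
        simp [fFam, h] at hf
      have hd : dm b ≠ u := fun h => hC (hsa1 β' b u h)
      have hf' : fFam C g β' u = fFam C g ([] : List A) u := by
        simpa [fFam, hC] using hf.symm
      have hv : viewL dm step s0 obs u β' = viewL dm step s0 obs u [] :=
        ih u β' [] (by simp at hlen ⊢; omega) hf'
      have ho : obs u (runL step s0 (b :: β')) = obs u (runL step s0 []) :=
        hsec u (b :: β') [] (by simpa [fFam, hC] using hf.symm)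
      rw [viewL_cons_ne dm step s0 obs β' hd, hv, ho]
      simp [viewL, runL, absorb]
    | a :: α', [] =>
      have hC : ¬ C α' a u := by
        intro h
        simp [fFam, h] at hf
      have hd : dm a ≠ u := fun h => hC (hsa1 α' a u h)
      have hf' : fFam C g α' u = fFam C g ([] : List A) u := by
        simpa [fFam, hC] using hf
      have hv : viewL dm step s0 obs u α' = viewL dm step s0 obs u [] :=
        ih u α' [] (by simp at hlen ⊢; omega) hf'
      have ho : obs u (runL step s0 (a :: α')) = obs u (runL step s0 []) :=
        hsec u (a :: α') [] (by simpa [fFam, hC] using hf)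
      rw [viewL_cons_ne dm step s0 obs α' hd, hv, ho]
      simp [viewL, runL, absorb]
    | a :: α', b :: β' =>
      have ho : obs u (runL step s0 (a :: α')) = obs u (runL step s0 (b :: β')) :=
        hsec u _ _ hf
      by_cases hCa : C α' a u <;> by_cases hCb : C β' b u
      · -- both recorded
        have hg : g α' a u = g β' b u := by
          have := hf; simp [fFam, hCa, hCb] at this; exact this.1
        have hab : a = b := hsa2 α' β' a b u hg
        subst hab
        have hf' : fFam C g α' u = fFam C g β' u := by
          have := hf; simp [fFam, hCa, hCb] at this; exact this.2
        have hv : viewL dm step s0 obs u α' = viewL dm step s0 obs u β' :=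
          ih u α' β' (by simp at hlen ⊢; omega) hf'
        by_cases hd : dm a = u
        · rw [viewL_cons_eq dm step s0 obs α' hd, viewL_cons_eq dm step s0 obs β' hd, hv, ho]
        · rw [viewL_cons_ne dm step s0 obs α' hd, viewL_cons_ne dm step s0 obs β' hd, hv, ho]
      · -- a recorded, b not
        have hd : dm b ≠ u := fun h => hCb (hsa1 β' b u h)
        have hf' : fFam C g (a :: α') u = fFam C g β' u := by
          simpa [fFam, hCb] using hf
        have hv : viewL dm step s0 obs u (a :: α') = viewL dm step s0 obs u β' :=
          ih u (a :: α') β' (by simp at hlen ⊢; omega) hf'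
        obtain ⟨t, ht⟩ := viewL_head dm step s0 obs u (a :: α')
        rw [viewL_cons_ne dm step s0 obs β' hd, ← hv, ht, ← ho]
        exact (absorb_self _ _).symm
      · -- b recorded, a not
        have hd : dm a ≠ u := fun h => hCa (hsa1 α' a u h)
        have hf' : fFam C g α' u = fFam C g (b :: β') u := by
          simpa [fFam, hCa] using hf
        have hv : viewL dm step s0 obs u α' = viewL dm step s0 obs u (b :: β') :=
          ih u α' (b :: β') (by simp at hlen ⊢; omega) hf'
        obtain ⟨t, ht⟩ := viewL_head dm step s0 obs u (b :: β')
        rw [viewL_cons_ne dm step s0 obs α' hd, hv, ht, ho]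
        exact absorb_self _ _
      · -- neither recorded
        have hda : dm a ≠ u := fun h => hCa (hsa1 α' a u h)
        have hdb : dm b ≠ u := fun h => hCb (hsa1 β' b u h)
        have hf' : fFam C g α' u = fFam C g β' u := by
          simpa [fFam, hCa, hCb] using hf
        have hv : viewL dm step s0 obs u α' = viewL dm step s0 obs u β' :=
          ih u α' β' (by simp at hlen ⊢; omega) hf'
        rw [viewL_cons_ne dm step s0 obs α' hda, viewL_cons_ne dm step s0 obs β' hdb, hv, ho]

/-- for a self-aware family `f`, a system is `f`-secure iff it is
`f`-view-secure. -/
theorem statement_0 {D A O G S : Type} (dm : A → D) (step : S → A → S) (s0 : S)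
    (obs : D → S → O) (C : List A → A → D → Prop) (g : List A → A → D → G)
    (hsa1 : ∀ α a u, dm a = u → C α a u)
    (hsa2 : ∀ α β a b u, g α a u = g β b u → a = b) :
    (∀ u (α β : List A), fFam C g α u = fFam C g β u →
        obs u (runL step s0 α) = obs u (runL step s0 β)) ↔
    (∀ u (α β : List A), fFam C g α u = fFam C g β u →
        viewL dm step s0 obs u α = viewL dm step s0 obs u β) := by
  constructor
  · intro hsec u α β hf
    exact forward_aux dm step s0 obs C g hsa1 hsa2 hsec (α.length + β.length) u α β le_rfl hf
  · intro hview u α β hf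
    have hv := hview u α β hf
    obtain ⟨t, ht⟩ := viewL_head dm step s0 obs u α
    obtain ⟨t', ht'⟩ := viewL_head dm step s0 obs u β
    rw [ht, ht'] at hv
    exact Sum.inr.inj (List.head_eq_of_cons_eq hv)
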